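/- Consider the Lie algebra L_{9,1}^{p,q} with pq ≠ 0 and nonzero brackets [X_1,X_2]=X_3, [X_1,X_3]=−X_2, [X_2,X_3]=X_1, [X_1,X_5]=X_6, [X_1,X_6]=X_5, [X_2,X_4]=−X_6, [X_2,X_6]=X_4, [X_3,X_4]=X_5, [X_3,X_5]=−X_4, [X_4,X_9]=X_4, [X_5,X_9]=X_5, [X_6,X_9]=X_6, [X_7,X_9]=pX_7, [X_8,X_9]=qX_8. The functions J_1 = x_4²+x_5²+x_6², J_2 = x_1 x_4 + x_2 x_5 + x_3 x_6, J_3 = x_7, J_4 = x_8 satisfy the semi-invariance conditions \hat{X}_9(J_1) = −2J_1, \hat{X}_9(J_2) = −J_2, \hat{X}_9(J_3) = −p J_3, \hat{X}_9(J_4) = −q J_4. -/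

import Mathlib

open Finset

noncomputable def Xhat (C : Fin 9 → Fin 9 → Fin 9 → ℝ) (i : Fin 9)
    (F : (Fin 9 → ℝ) → ℝ) : (Fin 9 → ℝ) → ℝ :=
  fun x => ∑ j : Fin 9, (∑ k : Fin 9, C i j k * x k) * fderiv ℝ F x (Pi.single j 1)

noncomputable def Lhalf (p q : ℝ) : Fin 9 → Fin 9 → Fin 9 → ℝ := fun i j k =>
  if (i, j, k) = ((0 : Fin 9), (1 : Fin 9), (2 : Fin 9)) then (1 : ℝ) else
  if (i, j, k) = ((0 : Fin 9), (2 : Fin 9), (1 : Fin 9)) then (-1 : ℝ) else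
  if (i, j, k) = ((1 : Fin 9), (2 : Fin 9), (0 : Fin 9)) then (1 : ℝ) else
  if (i, j, k) = ((0 : Fin 9), (4 : Fin 9), (5 : Fin 9)) then (1 : ℝ) else
  if (i, j, k) = ((0 : Fin 9), (5 : Fin 9), (4 : Fin 9)) then (1 : ℝ) else
  if (i, j, k) = ((1 : Fin 9), (3 : Fin 9), (5 : Fin 9)) then (-1 : ℝ) else
  if (i, j, k) = ((1 : Fin 9), (5 : Fin 9), (3 : Fin 9)) then (1 : ℝ) else
  if (i, j, k) = ((2 : Fin 9), (3 : Fin 9), (4 : Fin 9)) then (1 : ℝ) else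
  if (i, j, k) = ((2 : Fin 9), (4 : Fin 9), (3 : Fin 9)) then (-1 : ℝ) else
  if (i, j, k) = ((3 : Fin 9), (8 : Fin 9), (3 : Fin 9)) then (1 : ℝ) else
  if (i, j, k) = ((4 : Fin 9), (8 : Fin 9), (4 : Fin 9)) then (1 : ℝ) else
  if (i, j, k) = ((5 : Fin 9), (8 : Fin 9), (5 : Fin 9)) then (1 : ℝ) else
  if (i, j, k) = ((6 : Fin 9), (8 : Fin 9), (6 : Fin 9)) then (p : ℝ) else
  if (i, j, k) = ((7 : Fin 9), (8 : Fin 9), (7 : Fin 9)) then (q : ℝ) else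
  0

noncomputable def C (p q : ℝ) (i j k : Fin 9) : ℝ := Lhalf p q i j k - Lhalf p q j i k

noncomputable def J₁ : (Fin 9 → ℝ) → ℝ := fun x => (x 3)^2 + (x 4)^2 + (x 5)^2
noncomputable def J₂ : (Fin 9 → ℝ) → ℝ := fun x => x 0 * x 3 + x 1 * x 4 + x 2 * x 5
noncomputable def J₃ : (Fin 9 → ℝ) → ℝ := fun x => x 6
noncomputable def J₄ : (Fin 9 → ℝ) → ℝ := fun x => x 7


lemma fderiv_J1 (x v : Fin 9 → ℝ) :
    fderiv ℝ J₁ x v = 2*x 3*v 3 + 2*x 4*v 4 + 2*x 5*v 5 := by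
  have h3 := (hasFDerivAt_apply (𝕜 := ℝ) (3:Fin 9) x).mul (hasFDerivAt_apply (𝕜 := ℝ) (3:Fin 9) x)
  have h4 := (hasFDerivAt_apply (𝕜 := ℝ) (4:Fin 9) x).mul (hasFDerivAt_apply (𝕜 := ℝ) (4:Fin 9) x)
  have h5 := (hasFDerivAt_apply (𝕜 := ℝ) (5:Fin 9) x).mul (hasFDerivAt_apply (𝕜 := ℝ) (5:Fin 9) x)
  have h := (h3.add h4).add h5
  unfold J₁
  simp only [pow_two]
  rw [HasFDerivAt.fderiv (f := fun x : Fin 9 → ℝ => x 3 * x 3 + x 4 * x 4 + x 5 * x 5) h]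
  simp
  ring

lemma fderiv_J2 (x v : Fin 9 → ℝ) :
    fderiv ℝ J₂ x v = x 0*v 3 + x 3*v 0 + x 1*v 4 + x 4*v 1 + x 2*v 5 + x 5*v 2 := by
  have h1 := (hasFDerivAt_apply (𝕜 := ℝ) (0:Fin 9) x).mul (hasFDerivAt_apply (𝕜 := ℝ) (3:Fin 9) x)
  have h2 := (hasFDerivAt_apply (𝕜 := ℝ) (1:Fin 9) x).mul (hasFDerivAt_apply (𝕜 := ℝ) (4:Fin 9) x)
  have h3 := (hasFDerivAt_apply (𝕜 := ℝ) (2:Fin 9) x).mul (hasFDerivAt_apply (𝕜 := ℝ) (5:Fin 9) x)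
  have h := (h1.add h2).add h3
  unfold J₂
  rw [HasFDerivAt.fderiv (f := fun x : Fin 9 → ℝ => x 0 * x 3 + x 1 * x 4 + x 2 * x 5) h]
  simp
  ring

lemma fderiv_J3 (x v : Fin 9 → ℝ) : fderiv ℝ J₃ x v = v 6 := by
  have h := hasFDerivAt_apply (𝕜 := ℝ) (6:Fin 9) x
  unfold J₃
  rw [h.fderiv]
  simp

lemma fderiv_J4 (x v : Fin 9 → ℝ) : fderiv ℝ J₄ x v = v 7 := by
  have h := hasFDerivAt_apply (𝕜 := ℝ) (7:Fin 9) x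
  unfold J₄
  rw [h.fderiv]
  simp


lemma sum9 (f : Fin 9 → ℝ) : ∑ j, f j = f 0 + f 1 + f 2 + f 3 + f 4 + f 5 + f 6 + f 7 + f 8 := by
  rw [Fin.sum_univ_castSucc, Fin.sum_univ_eight]
  norm_num [show Fin.castSucc (0:Fin 8) = (0:Fin 9) from rfl,
    show Fin.castSucc (1:Fin 8) = (1:Fin 9) from rfl,
    show Fin.castSucc (2:Fin 8) = (2:Fin 9) from rfl,
    show Fin.castSucc (3:Fin 8) = (3:Fin 9) from rfl,
    show Fin.castSucc (4:Fin 8) = (4:Fin 9) from rfl,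
    show Fin.castSucc (5:Fin 8) = (5:Fin 9) from rfl,
    show Fin.castSucc (6:Fin 8) = (6:Fin 9) from rfl,
    show Fin.castSucc (7:Fin 8) = (7:Fin 9) from rfl,
    show (Fin.last 8) = (8:Fin 9) from rfl]

set_option maxHeartbeats 1000000 in
theorem semiinvariance_L9_1 (p q : ℝ) (hp : p ≠ 0) (hq : q ≠ 0) :
    ∀ x : Fin 9 → ℝ,
      Xhat (C p q) 8 J₁ x = -2 * J₁ x ∧
      Xhat (C p q) 8 J₂ x = - J₂ x ∧
      Xhat (C p q) 8 J₃ x = -p * J₃ x ∧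
      Xhat (C p q) 8 J₄ x = -q * J₄ x := by
  intro x
  refine ⟨?_, ?_, ?_, ?_⟩
  · unfold Xhat
    simp only [sum9, fderiv_J1]
    simp [C, Lhalf, Pi.single_apply, J₁]
    ring
  · unfold Xhat
    simp only [sum9, fderiv_J2]
    simp [C, Lhalf, Pi.single_apply, J₂]
    ring
  · unfold Xhat
    simp only [sum9, fderiv_J3]
    simp [C, Lhalf, Pi.single_apply, J₃]
  · unfold Xhat
    simp only [sum9, fderiv_J4]
    simp [C, Lhalf, Pi.single_apply, J₄]
    try ring
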